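/- With notation as in the main construction (G the group of permutations of X = ⋃X_i moving only finitely many points between the infinite sets X_i), the map ρ ↦ S_ρ respects the 5-ary operation Q: S_{Q(ρ₁,σ₁,ρ₂,σ₂,τ)} = {f∈G : ∃ g,h∈G, g∈S_{ρ₁}, g⁻¹f∈S_{σ₁}, h∈S_{ρ₂}, h⁻¹f∈S_{σ₂}, g⁻¹h∈S_τ}, where Q(ρ₁,σ₁,ρ₂,σ₂,τ) = {(i,j) : ∃k,ℓ, (i,k)∈ρ₁, (k,j)∈σ₁, (i,ℓ)∈ρ₂, (ℓ,j)∈σ₂, (k,ℓ)∈τ}. -/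

import Mathlib

open Pointwise

/-- The group of permutations of `X` (written as acting on the right, i.e. as elements of the
opposite of `Equiv.Perm X`, so that products compose left-to-right) that move only finitely
many elements of `X` between the fibers of `ι : X → I`. -/
def restrictedPermGroup {X I : Type*} (ι : X → I) : Set (Equiv.Perm X)ᵐᵒᵖ :=
  {g | {x | ι (g.unop x) ≠ ι x}.Finite}

/-- For a binary relation `ρ` on `I`, the set `S_ρ` of permutations in the restricted
permutation group which move an element of the fiber over `i` into the fiber over `j`
only when `ρ i j` holds. -/
def relSet {X I : Type*} (ι : X → I) (ρ : I → I → Prop) : Set (Equiv.Perm X)ᵐᵒᵖ :=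
  {g | g ∈ restrictedPermGroup ι ∧ ∀ x, ρ (ι x) (ι (g.unop x))}

/-- Jónsson's 5-ary operation `Q` on binary relations. -/
def Qrel {I : Type*} (ρ₁ σ₁ ρ₂ σ₂ τ : I → I → Prop) : I → I → Prop :=
  fun i j => ∃ k l, ρ₁ i k ∧ σ₁ k j ∧ ρ₂ i l ∧ σ₂ l j ∧ τ k l

theorem Equiv.Perm.apply_inv_self {α : Type*} (f : Equiv.Perm α) (x : α) : f (f⁻¹ x) = x :=
  f.apply_symm_apply x

theorem Equiv.Perm.inv_apply_self {α : Type*} (f : Equiv.Perm α) (x : α) : f⁻¹ (f x) = x :=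
  f.symm_apply_apply x

lemma restricted_mul {X I : Type*} (ι : X → I) {a b : (Equiv.Perm X)ᵐᵒᵖ}
    (ha : a ∈ restrictedPermGroup ι) (hb : b ∈ restrictedPermGroup ι) :
    a * b ∈ restrictedPermGroup ι := by
  have : {x | ι ((a*b).unop x) ≠ ι x} ⊆
      {x | ι (a.unop x) ≠ ι x} ∪ (a.unop) ⁻¹' {x | ι (b.unop x) ≠ ι x} := by
    intro x hx
    simp only [MulOpposite.unop_mul, Equiv.Perm.mul_apply, Set.mem_setOf_eq] at hx
    by_contra hc
    simp only [Set.mem_union, Set.mem_setOf_eq, Set.mem_preimage] at hc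
    push_neg at hc
    exact hx (hc.2.trans hc.1)
  exact Set.Finite.subset (ha.union (hb.preimage (a.unop.injective.injOn))) this

lemma restricted_inv {X I : Type*} (ι : X → I) {a : (Equiv.Perm X)ᵐᵒᵖ}
    (ha : a ∈ restrictedPermGroup ι) : a⁻¹ ∈ restrictedPermGroup ι := by
  have : {x | ι (a⁻¹.unop x) ≠ ι x} ⊆ a.unop '' {x | ι (a.unop x) ≠ ι x} := by
    intro x hx
    refine ⟨a⁻¹.unop x, ?_, ?_⟩
    · simp only [Set.mem_setOf_eq] at hx ⊢
      simp only [MulOpposite.unop_inv] at hx ⊢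
      rw [Equiv.Perm.apply_inv_self]
      exact fun h => hx h.symm
    · simp [MulOpposite.unop_inv]
  exact Set.Finite.subset (ha.image _) this

lemma exists_perm_of_recolor {X I : Type*} (ι : X → I)
    (hfib : ∀ i : I, {x | ι x = i}.Infinite) (κ : X → I)
    (hfin : {x | κ x ≠ ι x}.Finite) :
    ∃ e : Equiv.Perm X, ∀ x, ι (e x) = κ x := by
  have hcard : ∀ i : I, Nonempty ({x // κ x = i} ≃ {x // ι x = i}) := by
    intro i
    rw [← Cardinal.eq]
    have hAB : {x | κ x = i} ⊆ {x | ι x = i} ∪ {x | κ x ≠ ι x} := by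
      intro x hx
      by_cases h : κ x = ι x
      · exact Or.inl (show ι x = i from h ▸ (hx : κ x = i))
      · exact Or.inr h
    have hBA : {x | ι x = i} ⊆ {x | κ x = i} ∪ {x | κ x ≠ ι x} := by
      intro x hx
      by_cases h : κ x = ι x
      · exact Or.inl (h.trans hx)
      · exact Or.inr h
    have hBinf : ({x | ι x = i}).Infinite := hfib i
    have hAinf : ({x | κ x = i}).Infinite := by
      have : {x | ι x = i} \ {x | κ x ≠ ι x} ⊆ {x | κ x = i} := by
        intro x ⟨h1, h2⟩
        simp only [Set.mem_setOf_eq, not_not] at h2 ⊢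
        exact h2.trans h1
      exact (hBinf.diff hfin).mono this
    have hF : (Cardinal.mk {x | κ x ≠ ι x}) < Cardinal.aleph0 := hfin.lt_aleph0
    have e1 : Cardinal.mk {x // κ x = i} ≤ Cardinal.mk {x // ι x = i} := by
      calc Cardinal.mk ({x | κ x = i} : Set X)
          ≤ Cardinal.mk (({x | ι x = i} ∪ {x | κ x ≠ ι x} : Set X)) :=
            Cardinal.mk_le_mk_of_subset hAB
        _ ≤ Cardinal.mk {x | ι x = i} + Cardinal.mk {x | κ x ≠ ι x} :=
            Cardinal.mk_union_le _ _
        _ = Cardinal.mk {x | ι x = i} :=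
            Cardinal.add_eq_left (Cardinal.aleph0_le_mk_iff.mpr hBinf.to_subtype) (le_of_lt (lt_of_lt_of_le hF (Cardinal.aleph0_le_mk_iff.mpr hBinf.to_subtype)))
    have e2 : Cardinal.mk {x // ι x = i} ≤ Cardinal.mk {x // κ x = i} := by
      calc Cardinal.mk ({x | ι x = i} : Set X)
          ≤ Cardinal.mk (({x | κ x = i} ∪ {x | κ x ≠ ι x} : Set X)) :=
            Cardinal.mk_le_mk_of_subset hBA
        _ ≤ Cardinal.mk {x | κ x = i} + Cardinal.mk {x | κ x ≠ ι x} :=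
            Cardinal.mk_union_le _ _
        _ = Cardinal.mk {x | κ x = i} :=
            Cardinal.add_eq_left (Cardinal.aleph0_le_mk_iff.mpr hAinf.to_subtype) (le_of_lt (lt_of_lt_of_le hF (Cardinal.aleph0_le_mk_iff.mpr hAinf.to_subtype)))
    exact le_antisymm e1 e2
  let u : ∀ i, {x // κ x = i} ≃ {x // ι x = i} := fun i => Classical.choice (hcard i)
  refine ⟨(Equiv.sigmaFiberEquiv κ).symm.trans
    ((Equiv.sigmaCongrRight u).trans (Equiv.sigmaFiberEquiv ι)), fun x => ?_⟩
  simp only [Equiv.trans_apply, Equiv.sigmaFiberEquiv, Equiv.sigmaCongrRight,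
    Equiv.coe_fn_symm_mk, Equiv.coe_fn_mk]
  exact (u (κ x) ⟨x, rfl⟩).prop

/-- The map `ρ ↦ S_ρ` respects the 5-ary operation `Q`: the set associated to
`Q(ρ₁,σ₁,ρ₂,σ₂,τ)` is the corresponding 5-ary operation applied to the sets
`S_{ρ₁}, S_{σ₁}, S_{ρ₂}, S_{σ₂}, S_τ`. -/
theorem relSet_Q {X I : Type*} (ι : X → I)
    (hfib : ∀ i : I, {x | ι x = i}.Infinite)
    (ρ₁ σ₁ ρ₂ σ₂ τ : I → I → Prop)
    (hρ₁ : Reflexive ρ₁) (hσ₁ : Reflexive σ₁) (hρ₂ : Reflexive ρ₂)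
    (hσ₂ : Reflexive σ₂) (hτ : Reflexive τ) :
    relSet ι (Qrel ρ₁ σ₁ ρ₂ σ₂ τ) =
      {f | f ∈ restrictedPermGroup ι ∧ ∃ g h : (Equiv.Perm X)ᵐᵒᵖ,
        g ∈ relSet ι ρ₁ ∧ g⁻¹ * f ∈ relSet ι σ₁ ∧
        h ∈ relSet ι ρ₂ ∧ h⁻¹ * f ∈ relSet ι σ₂ ∧ g⁻¹ * h ∈ relSet ι τ} := by
  ext f
  constructor
  · rintro ⟨hfG, hQ⟩
    have hchoice : ∀ x, ∃ k l, ρ₁ (ι x) k ∧ σ₁ k (ι (f.unop x)) ∧ ρ₂ (ι x) l ∧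
        σ₂ l (ι (f.unop x)) ∧ τ k l ∧ (ι (f.unop x) = ι x → k = ι x ∧ l = ι x) := by
      intro x
      by_cases hx : ι (f.unop x) = ι x
      · exact ⟨ι x, ι x, hρ₁ _, by rw [hx]; exact hσ₁ _, hρ₂ _, by rw [hx]; exact hσ₂ _,
          hτ _, fun _ => ⟨rfl, rfl⟩⟩
      · obtain ⟨k, l, h1, h2, h3, h4, h5⟩ := hQ x
        exact ⟨k, l, h1, h2, h3, h4, h5, fun hc => absurd hc hx⟩
    choose k l hk1 hk2 hk3 hk4 hk5 hk6 using hchoice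
    have hkfin : {x | k x ≠ ι x}.Finite :=
      hfG.subset fun x hx hfx => hx ((hk6 x hfx).1)
    have hlfin : {x | l x ≠ ι x}.Finite :=
      hfG.subset fun x hx hfx => hx ((hk6 x hfx).2)
    obtain ⟨e₁, he₁⟩ := exists_perm_of_recolor ι hfib k hkfin
    obtain ⟨e₂, he₂⟩ := exists_perm_of_recolor ι hfib l hlfin
    set g₀ : (Equiv.Perm X)ᵐᵒᵖ := MulOpposite.op e₁ with hg₀def
    set h₀ : (Equiv.Perm X)ᵐᵒᵖ := MulOpposite.op e₂ with hh₀def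
    have hug : g₀.unop = e₁ := rfl
    have huh : h₀.unop = e₂ := rfl
    have hgG : g₀ ∈ restrictedPermGroup ι := by
      refine hkfin.subset fun x hx => ?_
      simp only [Set.mem_setOf_eq, hug] at hx ⊢
      rw [he₁] at hx
      exact hx
    have hhG : h₀ ∈ restrictedPermGroup ι := by
      refine hlfin.subset fun x hx => ?_
      simp only [Set.mem_setOf_eq, huh] at hx ⊢
      rw [he₂] at hx
      exact hx
    refine ⟨hfG, g₀, h₀, ⟨hgG, fun x => by rw [hug, he₁]; exact hk1 x⟩,
      ⟨restricted_mul ι (restricted_inv ι hgG) hfG, fun y => ?_⟩,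
      ⟨hhG, fun x => by rw [huh, he₂]; exact hk3 x⟩,
      ⟨restricted_mul ι (restricted_inv ι hhG) hfG, fun y => ?_⟩,
      ⟨restricted_mul ι (restricted_inv ι hgG) hhG, fun y => ?_⟩⟩
    · have h2 := hk2 (e₁⁻¹ y)
      rw [← he₁ (e₁⁻¹ y), Equiv.Perm.apply_inv_self] at h2
      simpa [MulOpposite.unop_mul, MulOpposite.unop_inv, hug] using h2
    · have h4 := hk4 (e₂⁻¹ y)
      rw [← he₂ (e₂⁻¹ y), Equiv.Perm.apply_inv_self] at h4
      simpa [MulOpposite.unop_mul, MulOpposite.unop_inv, huh] using h4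
    · have h5 := hk5 (e₁⁻¹ y)
      rw [← he₁ (e₁⁻¹ y), Equiv.Perm.apply_inv_self, ← he₂ (e₁⁻¹ y)] at h5
      simpa [MulOpposite.unop_mul, MulOpposite.unop_inv, hug, huh] using h5
  · rintro ⟨hfG, g, h, ⟨hgG, hg⟩, ⟨_, hgf⟩, ⟨hhG, hh⟩, ⟨_, hhf⟩, ⟨_, hgh⟩⟩
    refine ⟨hfG, fun x => ⟨ι (g.unop x), ι (h.unop x), hg x, ?_, hh x, ?_, ?_⟩⟩
    · have := hgf (g.unop x)
      simpa [MulOpposite.unop_mul, MulOpposite.unop_inv, Equiv.Perm.inv_apply_self] using this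
    · have := hhf (h.unop x)
      simpa [MulOpposite.unop_mul, MulOpposite.unop_inv, Equiv.Perm.inv_apply_self] using this
    · have := hgh (g.unop x)
      simpa [MulOpposite.unop_mul, MulOpposite.unop_inv, Equiv.Perm.inv_apply_self] using this
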